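/- arXiv:0905.4063 — 4 statements merged into one kernel-verified Lean document; each statement's English description precedes it below -/
import Mathlib

section
/- For interaction structures w₁ from S₁ to S₂ and w₂ from S₂ to S₃, the angelic transformer of the sequential composition equals the composition of the angelic transformers: (w₁ ; w₂)° = w₁° ∘ w₂°. -/
structure IS (S S' : Type*) where
  A : S → Type*
  D : ∀ s, A s → Type*
  n : ∀ s (a : A s), D s a → S'

def IS.ang {S S' : Type*} (w : IS S S') (U : Set S') : Set S :=
  {s | ∃ a : w.A s, ∀ d : w.D s a, w.n s a d ∈ U}

/-- Sequential composition of interaction structures. -/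
def IS.seq {S₁ S₂ S₃ : Type*} (w₁ : IS S₁ S₂) (w₂ : IS S₂ S₃) : IS S₁ S₃ where
  A s := (a₁ : w₁.A s) × (∀ d₁ : w₁.D s a₁, w₂.A (w₁.n s a₁ d₁))
  D s p := (d₁ : w₁.D s p.1) × w₂.D (w₁.n s p.1 d₁) (p.2 d₁)
  n s p d := w₂.n (w₁.n s p.1 d.1) (p.2 d.1) d.2

theorem seq_ang {S₁ S₂ S₃ : Type*} (w₁ : IS S₁ S₂) (w₂ : IS S₂ S₃) (U : Set S₃) :
    (w₁.seq w₂).ang U = w₁.ang (w₂.ang U) := by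
  ext s
  constructor
  · rintro ⟨⟨a₁, f⟩, h⟩
    exact ⟨a₁, fun d₁ => ⟨f d₁, fun d₂ => h ⟨d₁, d₂⟩⟩⟩
  · rintro ⟨a₁, h⟩
    exact ⟨⟨a₁, fun d₁ => (h d₁).choose⟩, fun d => (h d.1).choose_spec d.2⟩
end

section
/- If R is a linear simulation from wₕ to wₗ, then the direct image under R of any wₕ-invariant is a wₗ-invariant: if U ⊆ wₕ°(U) then ⟨R⁻¹⟩(U) ⊆ wₗ°(⟨R⁻¹⟩(U)), where ⟨R⁻¹⟩(U) = {sₗ | ∃ sₕ ∈ U, (sₕ,sₗ) ∈ R}. -/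
def LinSim {Sh Sl : Type*} (wh : IS Sh Sh) (wl : IS Sl Sl) (R : Set (Sh × Sl)) : Prop :=
  ∀ sh sl, (sh, sl) ∈ R → ∀ ah : wh.A sh, ∃ al : wl.A sl,
    ∀ dl : wl.D sl al, ∃ dh : wh.D sh ah,
      (wh.n sh ah dh, wl.n sl al dl) ∈ R

/-- Direct image along `R`. -/
def img {Sh Sl : Type*} (R : Set (Sh × Sl)) (U : Set Sh) : Set Sl :=
  {sl | ∃ sh ∈ U, (sh, sl) ∈ R}

theorem linSim_image_invariant {Sh Sl : Type*} (wh : IS Sh Sh) (wl : IS Sl Sl)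
    (R : Set (Sh × Sl)) (hR : LinSim wh wl R) (U : Set Sh) (hU : U ⊆ wh.ang U) :
    img R U ⊆ wl.ang (img R U) := by
  rintro sl ⟨sh, hshU, hshR⟩
  obtain ⟨ah, hah⟩ := hU hshU
  obtain ⟨al, hal⟩ := hR sh sl hshR ah
  refine ⟨al, fun dl => ?_⟩
  obtain ⟨dh, hdh⟩ := hal dl
  exact ⟨wh.n sh ah dh, hah dh, hdh⟩
end

section
/- Let F be a monotone predicate transformer on P(S) with angelic iteration F*(U) = μX.(U ∪ F(X)). For monotone predicate transformers Fₕ on P(Sₕ) and Fₗ on P(Sₗ), say a relation R ⊆ Sₕ × Sₗ is a simulation of Fₕ by Fₗ if ⟨R⁻¹⟩ ∘ Fₕ ⊆ Fₗ ∘ ⟨R⁻¹⟩ pointwise. Then R is a simulation of Fₕ by (Fₗ)* if and only if R is a simulation of (Fₕ)* by (Fₗ)*. -/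
def star {S : Type*} (F : Set S → Set S) (U : Set S) : Set S :=
  sInf {X | U ∪ F X ⊆ X}

/-- `R` is a simulation of `Fh` by `Fl`: `⟨R⁻¹⟩ ∘ Fh ⊆ Fl ∘ ⟨R⁻¹⟩` pointwise. -/
def PTSim {Sh Sl : Type*} (Fh : Set Sh → Set Sh) (Fl : Set Sl → Set Sl)
    (R : Set (Sh × Sl)) : Prop :=
  ∀ U : Set Sh, img R (Fh U) ⊆ Fl (img R U)

lemma star_le {S : Type*} {F : Set S → Set S} {U X : Set S}
    (h : U ∪ F X ⊆ X) : star F U ⊆ X :=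
  sInf_le h

lemma subset_star {S : Type*} (F : Set S → Set S) (U : Set S) : U ⊆ star F U :=
  fun _ hx => le_sInf (fun _ hX => (Set.union_subset_iff.1 hX).1) hx

lemma F_star_subset {S : Type*} {F : Set S → Set S} (hF : Monotone F)
    (U : Set S) : F (star F U) ⊆ star F U := by
  intro x hx
  show x ∈ sInf {X | U ∪ F X ⊆ X}
  rw [Set.sInf_eq_sInter, Set.mem_sInter]
  intro X hX
  exact (Set.union_subset_iff.1 hX).2 (hF (sInf_le hX) hx)

lemma star_mono {S : Type*} {F : Set S → Set S} {U V : Set S}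
    (h : U ⊆ V) : star F U ⊆ star F V :=
  sInf_le_sInf fun _X hX => Set.union_subset (h.trans (Set.union_subset_iff.1 hX).1)
    (Set.union_subset_iff.1 hX).2

lemma star_idem {S : Type*} {F : Set S → Set S} (hF : Monotone F)
    (U : Set S) : star F (star F U) ⊆ star F U :=
  star_le (Set.union_subset subset_rfl (F_star_subset hF U))

lemma img_mono {Sh Sl : Type*} {R : Set (Sh × Sl)} {U V : Set Sh}
    (h : U ⊆ V) : img R U ⊆ img R V :=
  fun _ ⟨sh, hsh, hR⟩ => ⟨sh, h hsh, hR⟩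

theorem genSim_iff_star_sim {Sh Sl : Type*}
    (Fh : Set Sh → Set Sh) (Fl : Set Sl → Set Sl)
    (hFh : Monotone Fh) (hFl : Monotone Fl) (R : Set (Sh × Sl)) :
    PTSim Fh (star Fl) R ↔ PTSim (star Fh) (star Fl) R := by
  constructor
  · intro h U
    set X : Set Sh := {sh | ∀ sl, (sh, sl) ∈ R → sl ∈ star Fl (img R U)} with hXdef
    have hstep : star Fh U ⊆ X := by
      apply star_le
      apply Set.union_subset
      · intro sh hsh sl hR
        exact subset_star Fl (img R U) ⟨sh, hsh, hR⟩
      · intro sh hsh sl hR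
        have h1 : sl ∈ star Fl (img R X) := h X ⟨sh, hsh, hR⟩
        have h2 : img R X ⊆ star Fl (img R U) := fun t ⟨s, hs, hR'⟩ => hs t hR'
        exact star_idem hFl (img R U) (star_mono h2 h1)
    rintro sl ⟨sh, hsh, hR⟩
    exact hstep hsh sl hR
  · intro h U
    have h1 : Fh U ⊆ star Fh U :=
      (hFh (subset_star Fh U)).trans (F_star_subset hFh U)
    exact (img_mono h1).trans (h U)
end

section
/- Let (S, A, J) be a basic topology with convergence: A is a closure operator, J an interior operator on P(S), A and J are compatible (A(U) ∩ J(V) nonempty implies U ∩ J(V) nonempty), and A satisfies the convergence rule: s ∈ A(U) and s ∈ A(V) imply s ∈ A(U ↓ V), where U ↓ V = ↓U ∩ ↓V and ↓U = {s | ∃ s' ∈ U, s ∈ A({s'})}. Then the lattice of open sets (subsets U with U = A(U)), with meet U ∩ V and join ⋁ᵢ Uᵢ = A(⋃ᵢ Uᵢ), is distributive: for open U and a family of open sets (Vᵢ), U ∩ ⋁ᵢ Vᵢ = ⋁ᵢ (U ∩ Vᵢ). -/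
/-- Down-closure with respect to a closure operator `A`. -/
def dc {S : Type*} (A : Set S → Set S) (U : Set S) : Set S :=
  {s | ∃ s' ∈ U, s ∈ A {s'}}

theorem convergent_basic_topology_distributive {S : Type*}
    (A J : Set S → Set S)
    (hA1 : ∀ U : Set S, U ⊆ A U)
    (hA2 : ∀ U V : Set S, U ⊆ A V → A U ⊆ A V)
    (hJ1 : ∀ U : Set S, J U ⊆ U)
    (hJ2 : ∀ U V : Set S, J U ⊆ V → J U ⊆ J V)
    (hcompat : ∀ U V : Set S, (A U ∩ J V).Nonempty → (U ∩ J V).Nonempty)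
    (hconv : ∀ (s : S) (U V : Set S), s ∈ A U → s ∈ A V → s ∈ A (dc A U ∩ dc A V))
    {ι : Type*} (U : Set S) (V : ι → Set S)
    (hU : U = A U) (hV : ∀ i, V i = A (V i)) :
    U ∩ A (⋃ i, V i) = A (⋃ i, U ∩ V i) := by
  apply Set.Subset.antisymm
  · rintro s ⟨hsU, hsV⟩
    have h1 : s ∈ A U := hA1 U hsU
    have h2 := hconv s U (⋃ i, V i) h1 hsV
    have key : dc A U ∩ dc A (⋃ i, V i) ⊆ A (⋃ i, U ∩ V i) := by
      rintro t ⟨⟨u, hu, htu⟩, ⟨v, hv, htv⟩⟩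
      obtain ⟨i, hvi⟩ := Set.mem_iUnion.mp hv
      have htU : t ∈ U := by
        rw [hU]
        exact hA2 {u} U (by simpa using hA1 U hu) htu
      have htV : t ∈ V i := by
        rw [hV i]
        exact hA2 {v} (V i) (by simpa using hA1 (V i) hvi) htv
      exact hA1 _ (Set.mem_iUnion.mpr ⟨i, htU, htV⟩)
    exact hA2 _ _ key h2
  · intro s hs
    constructor
    · rw [hU]
      exact hA2 _ _ (fun t ht => by
        obtain ⟨i, htU, _⟩ := Set.mem_iUnion.mp ht
        exact hA1 U htU) hs
    · exact hA2 _ _ (fun t ht => by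
        obtain ⟨i, _, htV⟩ := Set.mem_iUnion.mp ht
        exact hA1 _ (Set.mem_iUnion.mpr ⟨i, htV⟩)) hs
end
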